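/- Let $p_1, \ldots, p_J$ be distinct primes, each congruent to $1$ modulo $4$. For each $j$, let $\theta_{p_j} = \arg(\pi_j)$ where $\pi_j \in \mathbb{Z}[i]$ is a Gaussian prime with $|\pi_j|^2 = p_j$ and $0 < \arg(\pi_j) < \pi/4$. If $c_1, \ldots, c_J \in \mathbb{Z}$ satisfy $\exp(i \sum_{j=1}^J c_j \theta_{p_j}) = 1$, then $c_j = 0$ for all $j$. -/

import Mathlib

open Complex

set_option synthInstance.maxHeartbeats 1000000 in
lemma gaussian_prime_of_norm_prime (w : GaussianInt) (hw : Nat.Prime w.norm.natAbs) :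
    Prime w := by
  rw [← irreducible_iff_prime]
  refine ⟨fun hu => ?_, fun x y hxy => ?_⟩
  · rw [← Zsqrtd.norm_eq_one_iff] at hu
    rw [hu] at hw
    exact hw.one_lt.ne' rfl
  · have hmul : x.norm.natAbs * y.norm.natAbs = w.norm.natAbs := by
      rw [← Int.natAbs_mul, ← Zsqrtd.norm_mul, ← hxy]
    rcases hw.eq_one_or_self_of_dvd x.norm.natAbs ⟨y.norm.natAbs, hmul.symm⟩ with h1 | h1
    · exact Or.inl (Zsqrtd.norm_eq_one_iff.mp h1)
    · refine Or.inr (Zsqrtd.norm_eq_one_iff.mp ?_)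
      have hpos := hw.pos
      rw [h1] at hmul
      nlinarith [hmul]

/-- Linear independence of the angles of distinct split Gaussian primes:
if `p₁, …, p_J` are distinct primes `≡ 1 (mod 4)`, `θ_{p_j} = arg(π_j)` with
`π_j = a_j + b_j i` a Gaussian prime of norm `p_j` and `0 < arg π_j < π/4`, and
`exp(i ∑ c_j θ_{p_j}) = 1` for integers `c_j`, then all `c_j = 0`. -/
theorem angles_linearly_independent (J : ℕ) (p : Fin J → ℕ)
    (hp : ∀ j, Nat.Prime (p j)) (hmod : ∀ j, p j % 4 = 1)
    (hinj : Function.Injective p)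
    (a b : Fin J → ℤ) (hab : ∀ j, (a j) ^ 2 + (b j) ^ 2 = (p j : ℤ))
    (θ : Fin J → ℝ)
    (hθ : ∀ j, θ j = Complex.arg ((a j : ℂ) + (b j : ℂ) * Complex.I))
    (hθpos : ∀ j, 0 < θ j) (hθlt : ∀ j, θ j < Real.pi / 4)
    (c : Fin J → ℤ)
    (h : Complex.exp (Complex.I * (∑ j, (c j : ℂ) * (θ j : ℂ))) = 1) :
    ∀ j, c j = 0 := by
  have hpi := Real.pi_pos
  -- the Gaussian integers
  set w : Fin J → GaussianInt := fun j => ⟨a j, b j⟩ with hw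
  have hwz : ∀ j, (w j : ℂ) = (a j : ℂ) + (b j : ℂ) * I := fun j =>
    GaussianInt.toComplex_def' _ _
  have hnorm : ∀ j, (w j).norm = (p j : ℤ) := by
    intro j
    have : (w j).norm = a j ^ 2 + b j ^ 2 := by
      simp [Zsqrtd.norm_def, hw]; ring
    rw [this, hab]
  have hnatAbs : ∀ j, (w j).norm.natAbs = p j := fun j => by
    rw [hnorm]; exact Int.natAbs_natCast _
  have hprime : ∀ j, Prime (w j) := fun j =>
    gaussian_prime_of_norm_prime _ (by rw [hnatAbs]; exact hp j)
  have hwne : ∀ j, w j ≠ 0 := fun j => (hprime j).ne_zero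
  have hzne : ∀ j, (w j : ℂ) ≠ 0 := fun j hh =>
    hwne j (GaussianInt.toComplex_eq_zero.mp hh)
  -- positivity : 0 < b j < a j
  have hba : ∀ j, 0 < b j ∧ b j < a j := by
    intro j
    have habs_pos : 0 < ‖(w j : ℂ)‖ := by
      simpa using (norm_pos_iff.mpr (hzne j))
    have hre : ((w j : ℂ)).re = (a j : ℝ) := by rw [hwz]; simp
    have him : ((w j : ℂ)).im = (b j : ℝ) := by rw [hwz]; simp
    have harg : θ j = Complex.arg ((w j : ℂ)) := by rw [hθ, hwz]
    have hsin : Real.sin (θ j) = (b j : ℝ) / ‖(w j : ℂ)‖ := by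
      rw [harg, Complex.sin_arg, him]
    have hcos : Real.cos (θ j) = (a j : ℝ) / ‖(w j : ℂ)‖ := by
      rw [harg, Complex.cos_arg (hzne j), hre]
    have hsinpos : 0 < Real.sin (θ j) :=
      Real.sin_pos_of_pos_of_lt_pi (hθpos j) (by linarith [hθlt j, hpi])
    have hb0 : (0 : ℝ) < (b j : ℝ) := by
      have := hsinpos
      rw [hsin] at this
      exact (div_pos_iff.mp this).resolve_right (fun hh => absurd habs_pos (by linarith [hh.2])) |>.1
    have hsinlt : Real.sin (θ j) < Real.sin (Real.pi / 4) :=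
      Real.strictMonoOn_sin ⟨by linarith [hθpos j], by linarith [hθlt j, hpi]⟩
        ⟨by linarith [hpi], by linarith [hpi]⟩ (hθlt j)
    have hcosgt : Real.cos (Real.pi / 4) < Real.cos (θ j) :=
      Real.strictAntiOn_cos ⟨le_of_lt (hθpos j), by linarith [hθlt j, hpi]⟩
        ⟨by linarith [hpi], by linarith [hpi]⟩ (hθlt j)
    have hsc : Real.sin (θ j) < Real.cos (θ j) := by
      rw [Real.sin_pi_div_four] at hsinlt
      rw [Real.cos_pi_div_four] at hcosgt
      linarith
    have hba' : (b j : ℝ) < (a j : ℝ) := by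
      rw [hsin, hcos] at hsc
      exact (div_lt_div_iff_of_pos_right habs_pos).mp hsc
    exact ⟨by exact_mod_cast hb0, by exact_mod_cast hba'⟩
  -- non-divisibility facts
  have hdvd_norm : ∀ x y : GaussianInt, x ∣ y → x.norm ∣ y.norm := by
    rintro x y ⟨t, rfl⟩
    exact ⟨t.norm, (Zsqrtd.norm_mul _ _)⟩
  have hndvd : ∀ j k, j ≠ k → ¬ (w k ∣ w j) := by
    intro j k hjk hd
    have h2 : (p k : ℤ) ∣ (p j : ℤ) := by
      rw [← hnorm, ← hnorm]; exact hdvd_norm _ _ hd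
    have h3 : p k ∣ p j := Int.ofNat_dvd.mp h2
    exact hjk (hinj ((Nat.prime_dvd_prime_iff_eq (hp k) (hp j)).mp h3)).symm
  have hstar_norm : ∀ j, (star (w j)).norm = (p j : ℤ) := fun j => by
    rw [Zsqrtd.norm_conj, hnorm]
  have hndvd_star : ∀ j k, ¬ (w k ∣ star (w j)) := by
    intro j k hd
    by_cases hjk : j = k
    · subst hjk
      obtain ⟨t, ht⟩ := hd
      rw [Zsqrtd.ext_iff] at ht
      simp only [Zsqrtd.re_star, Zsqrtd.im_star, Zsqrtd.re_mul, Zsqrtd.im_mul] at ht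
      obtain ⟨e1, e2⟩ := ht
      obtain ⟨hb0, hba'⟩ := hba j
      -- from e1, e2 : a = a * t.re + (-1) * b * t.im, -b = a * t.im + b * t.re
      have key : a j * a j - b j * b j = (a j * a j + b j * b j) * t.re := by
        linear_combination a j * e1 + b j * e2
      have hx : 0 < t.re := by nlinarith [key, hb0, hba']
      nlinarith [key, hb0, hba', hx]
    · have h2 : (p k : ℤ) ∣ (p j : ℤ) := by
        rw [← hnorm, ← hstar_norm]; exact hdvd_norm _ _ hd
      have h3 : p k ∣ p j := Int.ofNat_dvd.mp h2
      exact hjk (hinj ((Nat.prime_dvd_prime_iff_eq (hp k) (hp j)).mp h3)).symm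
  -- exponents
  set n : Fin J → ℕ := fun j => (c j).toNat with hn
  set m : Fin J → ℕ := fun j => (-(c j)).toNat with hm
  have hcnm : ∀ j, (n j : ℤ) = c j + (m j : ℤ) := by intro j; simp [hn, hm]; omega
  -- complex manipulations
  set r : Fin J → ℂ := fun j => ((‖(w j : ℂ)‖ : ℝ) : ℂ) with hr
  have hrne : ∀ j, r j ≠ 0 := fun j =>
    Complex.ofReal_ne_zero.mpr (norm_ne_zero_iff.mpr (hzne j))
  have hexp : ∀ j, Complex.exp ((θ j : ℂ) * I) = (w j : ℂ) / r j := by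
    intro j
    rw [eq_div_iff (hrne j), mul_comm, hr]
    have harg : ((w j : ℂ)).arg = θ j := by rw [hθ, hwz]
    have h0 := Complex.norm_mul_exp_arg_mul_I (w j : ℂ)
    rw [harg] at h0
    exact h0
  -- product identity in ℂ with integer exponents
  have h1 : ∏ j, ((w j : ℂ) / r j) ^ (c j) = 1 := by
    calc ∏ j, ((w j : ℂ) / r j) ^ (c j)
        = ∏ j, Complex.exp ((c j : ℂ) * ((θ j : ℂ) * I)) :=
          Finset.prod_congr rfl fun j _ => by rw [Complex.exp_int_mul, hexp j]
      _ = Complex.exp (∑ j, (c j : ℂ) * ((θ j : ℂ) * I)) := (Complex.exp_sum _ _).symm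
      _ = Complex.exp (I * ∑ j, (c j : ℂ) * (θ j : ℂ)) := by
          congr 1
          rw [Finset.mul_sum]
          exact Finset.sum_congr rfl fun j _ => by ring
      _ = 1 := h
  have h2 : ∏ j, (((star (w j) : GaussianInt) : ℂ) / r j) ^ (c j) = 1 := by
    have h2' := congrArg (starRingEnd ℂ) h1
    rw [map_prod] at h2'
    rw [show (1 : ℂ) = starRingEnd ℂ 1 by simp]
    rw [← h2']
    refine Finset.prod_congr rfl fun j _ => ?_
    rw [map_zpow₀, map_div₀, GaussianInt.toComplex_star, hr]
    simp [Complex.conj_ofReal]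
  have hprodr : ∏ j, (r j) ^ (c j) ≠ 0 :=
    Finset.prod_ne_zero_iff.mpr fun j _ => zpow_ne_zero _ (hrne j)
  have hswne : ∀ j, ((star (w j) : GaussianInt) : ℂ) ≠ 0 := by
    intro j hh
    rw [GaussianInt.toComplex_eq_zero] at hh
    exact hwne j (by simpa using congrArg star hh)
  have hW : ∏ j, (w j : ℂ) ^ (c j) = ∏ j, ((star (w j) : GaussianInt) : ℂ) ^ (c j) := by
    have e1 : ∏ j, ((w j : ℂ) / r j) ^ (c j)
        = (∏ j, (w j : ℂ) ^ (c j)) / (∏ j, (r j) ^ (c j)) := by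
      rw [← Finset.prod_div_distrib]
      exact Finset.prod_congr rfl fun j _ => div_zpow _ _ _
    have e2 : ∏ j, (((star (w j) : GaussianInt) : ℂ) / r j) ^ (c j)
        = (∏ j, ((star (w j) : GaussianInt) : ℂ) ^ (c j)) / (∏ j, (r j) ^ (c j)) := by
      rw [← Finset.prod_div_distrib]
      exact Finset.prod_congr rfl fun j _ => div_zpow _ _ _
    rw [e1] at h1
    rw [e2] at h2
    rw [div_eq_one_iff_eq hprodr] at h1 h2
    rw [h1, h2]
  -- natural-exponent identity in ℂ
  have hC : ∏ j, ((w j : ℂ) ^ (n j) * ((star (w j) : GaussianInt) : ℂ) ^ (m j))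
      = ∏ j, ((w j : ℂ) ^ (m j) * ((star (w j) : GaussianInt) : ℂ) ^ (n j)) := by
    have side1 : ∀ j : Fin J, (w j : ℂ) ^ (n j) * ((star (w j) : GaussianInt) : ℂ) ^ (m j)
        = (w j : ℂ) ^ (c j) * ((w j : ℂ) * ((star (w j) : GaussianInt) : ℂ)) ^ ((m j : ℤ)) := by
      intro j
      rw [mul_zpow, ← zpow_natCast ((w j : ℂ)) (n j), ← zpow_natCast (((star (w j) : GaussianInt) : ℂ)) (m j),
        hcnm j, zpow_add₀ (hzne j)]
      ring
    have side2 : ∀ j : Fin J, (w j : ℂ) ^ (m j) * ((star (w j) : GaussianInt) : ℂ) ^ (n j)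
        = ((star (w j) : GaussianInt) : ℂ) ^ (c j) * ((w j : ℂ) * ((star (w j) : GaussianInt) : ℂ)) ^ ((m j : ℤ)) := by
      intro j
      rw [mul_zpow, ← zpow_natCast ((w j : ℂ)) (m j), ← zpow_natCast (((star (w j) : GaussianInt) : ℂ)) (n j),
        hcnm j, zpow_add₀ (hswne j)]
      ring
    calc ∏ j, ((w j : ℂ) ^ (n j) * ((star (w j) : GaussianInt) : ℂ) ^ (m j))
        = ∏ j, ((w j : ℂ) ^ (c j) * ((w j : ℂ) * ((star (w j) : GaussianInt) : ℂ)) ^ ((m j : ℤ))) :=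
          Finset.prod_congr rfl fun j _ => side1 j
      _ = (∏ j, (w j : ℂ) ^ (c j)) * ∏ j, ((w j : ℂ) * ((star (w j) : GaussianInt) : ℂ)) ^ ((m j : ℤ)) :=
          Finset.prod_mul_distrib
      _ = (∏ j, ((star (w j) : GaussianInt) : ℂ) ^ (c j)) * ∏ j, ((w j : ℂ) * ((star (w j) : GaussianInt) : ℂ)) ^ ((m j : ℤ)) := by
          rw [hW]
      _ = ∏ j, ((star (w j) : GaussianInt) : ℂ) ^ (c j) * ((w j : ℂ) * ((star (w j) : GaussianInt) : ℂ)) ^ ((m j : ℤ)) :=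
          Finset.prod_mul_distrib.symm
      _ = ∏ j, ((w j : ℂ) ^ (m j) * ((star (w j) : GaussianInt) : ℂ) ^ (n j)) :=
          Finset.prod_congr rfl fun j _ => (side2 j).symm
  -- back to the Gaussian integers
  have hZ : ∏ j, (w j ^ (n j) * (star (w j)) ^ (m j))
      = ∏ j, (w j ^ (m j) * (star (w j)) ^ (n j)) := by
    apply GaussianInt.toComplex_injective
    rw [map_prod, map_prod]
    simpa only [map_mul, map_pow] using hC
  -- multiplicity of w k on both sides
  intro k
  have hself : emultiplicity (w k) (w k) = 1 := by
    simpa using emultiplicity_pow_self_of_prime (hprime k) 1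
  have hterm : ∀ (u v : Fin J → ℕ) , ∀ j, j ≠ k →
      emultiplicity (w k) (w j ^ (u j) * (star (w j)) ^ (v j)) = 0 := by
    intro u v j hjk
    rw [emultiplicity_mul (hprime k), emultiplicity_pow (hprime k), emultiplicity_pow (hprime k),
      emultiplicity_eq_zero.2 (hndvd j k hjk), emultiplicity_eq_zero.2 (hndvd_star j k)]
    simp
  have hside : ∀ (u v : Fin J → ℕ),
      emultiplicity (w k) (∏ j, (w j ^ (u j) * (star (w j)) ^ (v j))) = (u k : ℕ∞) := by
    intro u v
    rw [Finset.emultiplicity_prod (hprime k)]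
    rw [Finset.sum_eq_single k]
    · rw [emultiplicity_mul (hprime k), emultiplicity_pow (hprime k), emultiplicity_pow (hprime k),
        hself, emultiplicity_eq_zero.2 (hndvd_star k k)]
      simp
    · intro j _ hjk
      exact hterm u v j hjk
    · intro hk
      exact absurd (Finset.mem_univ k) hk
  have hnm : (n k : ℕ∞) = (m k : ℕ∞) := by
    rw [← hside n m, ← hside m n, hZ]
  have hnm' : n k = m k := by exact_mod_cast hnm
  have : (c k).toNat = (-(c k)).toNat := hnm'
  omega
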